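/- Let F be a field and α, β ∈ F, where α ≠ 1 is a primitive ℓth root of unity (αˡ = 1 and αᵏ ≠ 1 for 1 ≤ k < ℓ). Let φ be the F-algebra automorphism of F[t] determined by φ(t) = αt + β, and set t̃ = (α − 1)t + β. If J is a nonzero proper ideal of F[t] with φ(J) ⊆ J, then there exist an integer n ≥ 0 and a polynomial g ∈ F[x] such that J is the principal ideal generated by t̃ⁿ · g(t̃^ℓ). -/

import Mathlib

open Polynomial

lemma coeff_aeval_C_mul_X' {F : Type*} [CommRing F] (α : F) (p : F[X]) (i : ℕ) :
    (aeval (C α * X) p).coeff i = p.coeff i * α ^ i := by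
  induction p using Polynomial.induction_on' with
  | add p q hp hq => simp [hp, hq, add_mul]
  | monomial k a =>
    simp only [aeval_monomial, mul_pow, ← C_pow, algebraMap_eq, coeff_monomial]
    rw [show C a * (C (α^k) * X^k) = C (a * α^k) * X^k by rw [← mul_assoc, ← C_mul],
      coeff_C_mul_X_pow]
    split_ifs with h h2 h3 <;> simp_all

lemma struct_aux {F : Type*} [Field F] (α : F) (ℓ : ℕ) (hℓ0 : 0 < ℓ)
    (hαℓ : α ^ ℓ = 1)
    (hprim : ∀ k : ℕ, 1 ≤ k → k < ℓ → α ^ k ≠ 1)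
    (p : F[X]) (hp0 : p ≠ 0) (hdvd : p ∣ aeval (C α * X) p) :
    ∃ (n : ℕ) (g : F[X]), p = X ^ n * aeval ((X : F[X]) ^ ℓ) g := by
  have hα0 : α ≠ 0 := by
    intro h; rw [h, zero_pow hℓ0.ne'] at hαℓ; exact zero_ne_one hαℓ
  set σp := aeval (C α * X) p with hσp
  have hcoeff : ∀ i, σp.coeff i = p.coeff i * α ^ i := fun i => coeff_aeval_C_mul_X' α p i
  obtain ⟨q, hq⟩ := hdvd
  set d := p.natDegree with hd
  have hσd : σp.coeff d ≠ 0 := by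
    rw [hcoeff]
    exact mul_ne_zero (leadingCoeff_ne_zero.mpr hp0) (pow_ne_zero _ hα0)
  have hσ0 : σp ≠ 0 := fun h => hσd (by simp [h])
  have hdeg_le : σp.natDegree ≤ d := natDegree_le_iff_coeff_eq_zero.mpr fun m hm => by
    rw [hcoeff, coeff_eq_zero_of_natDegree_lt hm, zero_mul]
  have hdeg_ge : d ≤ σp.natDegree := le_natDegree_of_ne_zero hσd
  have hq0 : q ≠ 0 := by rintro rfl; rw [mul_zero] at hq; exact hσ0 hq
  have hqdeg : q.natDegree = 0 := by
    have := natDegree_mul hp0 hq0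
    rw [← hq] at this
    omega
  obtain ⟨c, hc⟩ := natDegree_eq_zero.mp hqdeg
  rw [← hc] at hq
  -- for every i in support, α ^ i = c
  have hsupp : ∀ i ∈ p.support, α ^ i = c := by
    intro i hi
    have h1 : p.coeff i * α ^ i = p.coeff i * c := by
      rw [← hcoeff, hq, coeff_mul_C]
    exact mul_left_cancel₀ (mem_support_iff.mp hi) h1
  set n := p.natTrailingDegree with hn
  have hnsupp := natTrailingDegree_mem_support_of_nonzero hp0
  have hdvd' : ∀ i ∈ p.support, ℓ ∣ i - n := by
    intro i hi
    have hni : n ≤ i := natTrailingDegree_le_of_mem_supp i hi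
    have h1 : α ^ (i - n) * α ^ n = α ^ n := by
      rw [← pow_add, Nat.sub_add_cancel hni, hsupp i hi, hsupp n hnsupp]
    have hone : α ^ (i - n) = 1 := by
      have := mul_right_cancel₀ (pow_ne_zero n hα0) (h1.trans (one_mul _).symm)
      exact this
    -- divisibility
    have h2 : α ^ ((i - n) % ℓ) = 1 := by
      calc α ^ ((i-n) % ℓ) = α ^ (ℓ * ((i-n) / ℓ)) * α ^ ((i-n) % ℓ) := by
            rw [pow_mul, hαℓ, one_pow, one_mul]
        _ = α ^ (ℓ * ((i-n) / ℓ) + (i-n) % ℓ) := (pow_add α _ _).symm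
        _ = 1 := by rw [Nat.div_add_mod]; exact hone
    have hlt := Nat.mod_lt (i - n) hℓ0
    rcases Nat.eq_zero_or_pos ((i - n) % ℓ) with h | h
    · exact Nat.dvd_of_mod_eq_zero h
    · exact absurd h2 (hprim _ h hlt)
  refine ⟨n, ∑ i ∈ p.support, C (p.coeff i) * X ^ ((i - n) / ℓ), ?_⟩
  rw [map_sum]
  rw [Finset.mul_sum]
  conv_lhs => rw [p.as_sum_support]
  refine Finset.sum_congr rfl fun i hi => ?_
  have hni : n ≤ i := natTrailingDegree_le_of_mem_supp i hi
  rw [map_mul, aeval_C, map_pow, aeval_X, ← pow_mul, Nat.mul_div_cancel' (hdvd' i hi),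
    algebraMap_eq, ← C_mul_X_pow_eq_monomial,
    show X ^ n * (C (p.coeff i) * X ^ (i-n)) = C (p.coeff i) * X ^ (n + (i-n)) by ring,
    Nat.add_sub_cancel' hni]


/-- Let `F` be a field, `α ≠ 1` a primitive `ℓ`-th root of unity, `β ∈ F`.
Let `φ` be the `F`-algebra automorphism of `F[t]` with `φ(t) = αt + β` and set
`t̃ = (α − 1)t + β`.  If `J` is a nonzero proper `φ`-stable ideal of `F[t]`, then
`J = (t̃ⁿ · g(t̃^ℓ))` for some `n ≥ 0` and some polynomial `g ∈ F[x]`. -/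
theorem stmt_2 {F : Type*} [Field F] (α β : F) (ℓ : ℕ) (hℓ : 1 ≤ ℓ)
    (hα1 : α ≠ 1) (hαℓ : α ^ ℓ = 1)
    (hprim : ∀ k : ℕ, 1 ≤ k → k < ℓ → α ^ k ≠ 1)
    (φ : Polynomial F ≃ₐ[F] Polynomial F)
    (hφ : φ X = C α * X + C β)
    (J : Ideal (Polynomial F)) (hJbot : J ≠ ⊥) (hJtop : J ≠ ⊤)
    (hstab : ∀ f ∈ J, φ f ∈ J) :
    ∃ (n : ℕ) (g : Polynomial F),
      J = Ideal.span
        {(C (α - 1) * X + C β) ^ n * Polynomial.aeval ((C (α - 1) * X + C β) ^ ℓ) g} := by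
  have hα1' : α - 1 ≠ 0 := sub_ne_zero.mpr hα1
  set u : F[X] := C (α - 1) * X + C β with hu
  set A : F[X] →ₐ[F] F[X] := aeval u with hA
  have hinv : A.comp (aeval (C (α-1)⁻¹ * (X - C β))) = AlgHom.id F F[X] := by
    apply Polynomial.algHom_ext
    simp only [AlgHom.comp_apply, aeval_X, AlgHom.id_apply, hA, map_mul, map_sub, aeval_C,
      algebraMap_eq, hu]
    rw [add_sub_cancel_right, ← mul_assoc, ← C_sub, ← C_mul, inv_mul_cancel₀ hα1', C_1, one_mul]
  have hsurj : Function.Surjective A := fun q =>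
    ⟨aeval (C (α-1)⁻¹ * (X - C β)) q, by
      rw [← AlgHom.comp_apply, hinv, AlgHom.id_apply]⟩
  have hC : ∀ c : F, φ (C c) = C c := fun c => by
    rw [← algebraMap_eq]; exact φ.commutes c
  have hφu : φ u = C α * u := by
    rw [hu, map_add, map_mul, hC, hC, hφ]
    have e1 : (α-1)*α = α*(α-1) := mul_comm _ _
    have e2 : (α-1)*β + β = α*β := by ring
    rw [show C (α-1) * (C α * X + C β) + C β = C ((α-1)*α) * X + C ((α-1)*β + β) by
          rw [C_mul, C_add, C_mul]; ring,
        show C α * (C (α-1) * X + C β) = C (α*(α-1)) * X + C (α*β) by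
          rw [C_mul, C_mul]; ring,
        e1, e2]
  have hkey : ∀ q, φ (A q) = A (aeval (C α * X) q) := by
    have h : (φ.toAlgHom.comp A) = A.comp (aeval (C α * X)) := by
      apply Polynomial.algHom_ext
      simp only [AlgHom.comp_apply, AlgEquiv.toAlgHom_eq_coe, AlgHom.coe_coe, hA, aeval_X,
        map_mul, aeval_C, algebraMap_eq]
      exact hφu
    intro q
    exact DFunLike.congr_fun h q
  set J' : Ideal (Polynomial F) := J.comap A with hJ'
  have hmap : J'.map A = J := Ideal.map_comap_of_surjective A hsurj J
  obtain ⟨p, hp⟩ := IsPrincipalIdealRing.principal J'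
  have hp' : J' = Ideal.span {p} := hp
  have hp0 : p ≠ 0 := by
    rintro rfl
    apply hJbot
    rw [← hmap, hp', Ideal.span_singleton_eq_bot.mpr rfl, Ideal.map_bot]
  have hpJ : p ∈ J' := hp' ▸ Ideal.mem_span_singleton_self p
  have hσp : aeval (C α * X) p ∈ J' := by
    rw [Ideal.mem_comap] at hpJ ⊢
    rw [← hkey]
    exact hstab _ hpJ
  have hdvd : p ∣ aeval (C α * X) p := by
    rw [hp', Ideal.mem_span_singleton] at hσp; exact hσp
  obtain ⟨n, g, hpg⟩ := struct_aux α ℓ hℓ hαℓ hprim p hp0 hdvd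
  refine ⟨n, g, ?_⟩
  have hAg : A (aeval ((X : Polynomial F) ^ ℓ) g) = aeval (u ^ ℓ) g := by
    have h : A.comp (aeval ((X : Polynomial F) ^ ℓ)) = aeval (u ^ ℓ) := by
      apply Polynomial.algHom_ext
      simp [hA]
    exact DFunLike.congr_fun h g
  rw [← hmap, hp', Ideal.map_span, Set.image_singleton, hpg, map_mul, map_pow,
    show A X = u from aeval_X u, hAg]
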